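/- Let p be a prime, let A ∈ ℤ with gcd(A, p) = 1, and let k be a positive integer with k ≡ 1 (mod 3). Then S(A x³, p^k) = p^{(2k−2)/3} · S(A x³, p). -/

import Mathlib

noncomputable section
namespace CubicAppendix

/-- `S(Ax³, c) := ∑_{j=0}^{c−1} exp(2πi A j³ / c)`. -/
def S (A : ℤ) (c : ℕ) : ℂ :=
  ∑ j ∈ Finset.range c,
    Complex.exp (2 * Real.pi * Complex.I * (A : ℂ) * (j : ℂ) ^ 3 / (c : ℂ))

def ep (x : ℂ) : ℂ := Complex.exp (2 * Real.pi * Complex.I * x)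

lemma ep_int (n : ℤ) : ep (n : ℂ) = 1 := by
  rw [ep, show 2 * (Real.pi:ℂ) * Complex.I * n = n * (2 * Real.pi * Complex.I) by ring]
  exact Complex.exp_int_mul_two_pi_mul_I n

lemma ep_add (x y : ℂ) : ep (x + y) = ep x * ep y := by
  simp [ep, mul_add, Complex.exp_add]

lemma ep_eq_one_iff (a : ℤ) (n : ℕ) (hn : 0 < n) : ep ((a : ℂ) / n) = 1 ↔ (n:ℤ) ∣ a := by
  have hn' : (n : ℂ) ≠ 0 := Nat.cast_ne_zero.mpr hn.ne'
  have hpi : (2 * (Real.pi:ℂ) * Complex.I) ≠ 0 := by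
    simp [Real.pi_ne_zero, Complex.I_ne_zero]
  rw [ep, Complex.exp_eq_one_iff]
  constructor
  · rintro ⟨m, hm⟩
    rw [show (m:ℂ) * (2 * Real.pi * Complex.I) = 2 * Real.pi * Complex.I * m by ring] at hm
    have h2 : (a : ℂ) / n = m := mul_left_cancel₀ hpi hm
    have h3 : (a : ℂ) = m * n := by field_simp at h2; linear_combination h2
    have h4 : a = m * n := by exact_mod_cast h3
    exact ⟨m, by linarith⟩
  · rintro ⟨b, rfl⟩
    refine ⟨b, ?_⟩
    push_cast
    rw [mul_comm (n:ℂ) b, mul_div_assoc, div_self hn']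
    ring
lemma sum_ep (a : ℤ) (n : ℕ) (hn : 0 < n) :
    ∑ v ∈ Finset.range n, ep ((a : ℂ) * v / n) = if (n:ℤ) ∣ a then (n:ℂ) else 0 := by
  have hn' : (n : ℂ) ≠ 0 := Nat.cast_ne_zero.mpr hn.ne'
  have key : ∀ v : ℕ, ep ((a : ℂ) * v / n) = ep ((a:ℂ)/n) ^ v := by
    intro v
    rw [ep, ep, ← Complex.exp_nat_mul]
    ring_nf
  simp only [key]
  by_cases h : (n:ℤ) ∣ a
  · rw [if_pos h]
    rw [(ep_eq_one_iff a n hn).mpr h]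
    simp
  · rw [if_neg h]
    have hne : ep ((a:ℂ)/n) ≠ 1 := fun hc => h ((ep_eq_one_iff a n hn).mp hc)
    rw [geom_sum_eq hne]
    have : ep ((a:ℂ)/n) ^ n = 1 := by
      rw [← key n, mul_div_assoc, div_self hn', mul_one, ep_int]
    rw [this]
    simp
lemma sum_range_mul (f : ℕ → ℂ) (a b : ℕ) :
    ∑ j ∈ Finset.range (a * b), f j =
      ∑ w ∈ Finset.range b, ∑ u ∈ Finset.range a, f (u + a * w) := by
  induction b with
  | zero => simp
  | succ n ih =>
    rw [Finset.sum_range_succ, ← ih, Nat.mul_succ, Finset.sum_range_add]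
    simp [add_comm, mul_comm]

lemma S_eq (A : ℤ) (c : ℕ) : S A c = ∑ j ∈ Finset.range c, ep ((A : ℂ) * (j:ℂ)^3 / c) := by
  unfold S ep
  congr 1; ext j; congr 1; ring

lemma dvd_iff (p : ℕ) (hp : p.Prime) (A : ℤ) (hA : Int.gcd A p = 1) (u : ℕ) :
    ((p:ℤ))^2 ∣ 3 * A * (u:ℤ)^2 ↔ p ∣ u := by
  constructor
  · intro h
    by_contra hu
    have hpu : ¬ (p:ℤ) ∣ (u:ℤ) := by exact_mod_cast fun hc => hu (Int.ofNat_dvd.mp hc)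
    have hcop : IsCoprime ((p:ℤ)^2) (A * (u:ℤ)^2) := by
      apply IsCoprime.pow_left
      apply IsCoprime.mul_right
      · rw [Int.isCoprime_iff_gcd_eq_one, Int.gcd_comm]; exact hA
      · apply IsCoprime.pow_right
        rw [Int.isCoprime_iff_gcd_eq_one, Int.gcd_natCast_natCast]
        exact (hp.coprime_iff_not_dvd).mpr hu
    have h3 : ((p:ℤ))^2 ∣ 3 := hcop.dvd_of_dvd_mul_right (by rwa [show 3 * A * (u:ℤ)^2 = 3 * (A * u^2) by ring] at h)
    have : (p:ℤ)^2 ≤ 3 := Int.le_of_dvd (by norm_num) h3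
    have hp2 : 2 ≤ p := hp.two_le
    nlinarith [sq_nonneg ((p:ℤ) - 2)]
  · rintro ⟨m, rfl⟩
    exact ⟨3 * A * m^2, by push_cast; ring⟩
lemma step (p : ℕ) (hp : p.Prime) (A : ℤ) (hA : Int.gcd A p = 1) (t : ℕ) :
    S A (p ^ (t+4)) = (p:ℂ)^2 * S A (p ^ (t+1)) := by
  have hp0 : (p:ℂ) ≠ 0 := Nat.cast_ne_zero.mpr hp.pos.ne'
  have hsplit : p ^ (t+4) = p^(t+2) * p^2 := by ring
  rw [S_eq, hsplit, sum_range_mul]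
  -- rewrite each term
  have term_eq : ∀ w ∈ Finset.range (p^2), ∀ u ∈ Finset.range (p^(t+2)),
      ep ((A:ℂ) * ((u + p^(t+2) * w : ℕ):ℂ)^3 / ((p^(t+2) * p^2 : ℕ):ℂ)) =
      ep ((A:ℂ) * (u:ℂ)^3 / ((p^(t+4):ℕ):ℂ)) *
        ep (((3*A*(u:ℤ)^2 : ℤ):ℂ) * (w:ℂ) / ((p^2:ℕ):ℂ)) := by
    intro w _ u _
    have hid : (A:ℂ) * ((u + p^(t+2) * w : ℕ):ℂ)^3 / ((p^(t+2) * p^2 : ℕ):ℂ) =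
        (A:ℂ) * (u:ℂ)^3 / ((p^(t+4):ℕ):ℂ) +
        (((3*A*(u:ℤ)^2 : ℤ):ℂ) * (w:ℂ) / ((p^2:ℕ):ℂ) +
        ((3*A*(u:ℤ)*(w:ℤ)^2*(p:ℤ)^t + A*(w:ℤ)^3*(p:ℤ)^(2*t+2) : ℤ):ℂ)) := by
      push_cast
      field_simp
      ring
    rw [hid, ep_add, ep_add, ep_int, mul_one]
  rw [Finset.sum_congr rfl (fun w hw => Finset.sum_congr rfl (fun u hu => term_eq w hw u hu))]
  rw [Finset.sum_comm]
  have inner : ∀ u : ℕ,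
      ∑ w ∈ Finset.range (p^2), ep ((A:ℂ) * (u:ℂ)^3 / ((p^(t+4):ℕ):ℂ)) *
        ep (((3*A*(u:ℤ)^2 : ℤ):ℂ) * (w:ℂ) / ((p^2:ℕ):ℂ)) =
      ep ((A:ℂ) * (u:ℂ)^3 / ((p^(t+4):ℕ):ℂ)) * (if p ∣ u then ((p^2:ℕ):ℂ) else 0) := by
    intro u
    rw [← Finset.mul_sum, sum_ep _ _ (pow_pos hp.pos 2)]
    congr 1
    have : ((p^2:ℕ):ℤ) ∣ 3*A*(u:ℤ)^2 ↔ p ∣ u := by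
      push_cast
      exact dvd_iff p hp A hA u
    simp only [this]
  rw [Finset.sum_congr rfl (fun u _ => inner u)]
  -- now sum over u < p^(t+2) = p * p^(t+1)
  have h2 : p^(t+2) = p * p^(t+1) := by ring
  rw [h2, sum_range_mul]
  have inner2 : ∀ m ∈ Finset.range (p^(t+1)),
      ∑ r ∈ Finset.range p,
        (ep ((A:ℂ) * ((r + p * m : ℕ):ℂ)^3 / ((p^(t+4):ℕ):ℂ)) *
          (if p ∣ (r + p * m) then ((p^2:ℕ):ℂ) else 0)) =
      (p:ℂ)^2 * ep ((A:ℂ) * (m:ℂ)^3 / ((p^(t+1):ℕ):ℂ)) := by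
    intro m _
    rw [Finset.sum_eq_single 0]
    · have hdvd : p ∣ (0 + p * m) := ⟨m, by ring⟩
      rw [if_pos hdvd]
      have harg : (A:ℂ) * ((0 + p * m : ℕ):ℂ)^3 / ((p^(t+4):ℕ):ℂ) =
          (A:ℂ) * (m:ℂ)^3 / ((p^(t+1):ℕ):ℂ) := by
        push_cast
        field_simp
        ring
      rw [harg]
      push_cast
      ring
    · intro r hr hr0
      have : ¬ p ∣ (r + p * m) := by
        intro hc
        have : p ∣ r := (Nat.dvd_add_right ⟨m, rfl⟩).mp (by rwa [add_comm] at hc)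
        exact hr0 (Nat.eq_zero_of_dvd_of_lt this (Finset.mem_range.mp hr))
      rw [if_neg this, mul_zero]
    · intro h
      exact absurd (Finset.mem_range.mpr hp.pos) h
  rw [Finset.sum_congr rfl inner2, ← Finset.mul_sum, S_eq]
lemma main_aux (p : ℕ) (hp : p.Prime) (A : ℤ) (hA : Int.gcd A p = 1) :
    ∀ m : ℕ, S A (p^(3*m+1)) = (p:ℂ)^(2*m) * S A p := by
  intro m
  induction m with
  | zero => simp
  | succ n ih =>
    have h1 : 3*(n+1)+1 = (3*n+1)+3+0 := by ring
    have : S A (p^(3*(n+1)+1)) = (p:ℂ)^2 * S A (p^(3*n+1)) := by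
      have := step p hp A hA (3*n)
      rwa [show 3*n+4 = 3*(n+1)+1 by ring] at this
    rw [this, ih]
    ring

/- Statement 16 -/
theorem stmt16 (p : ℕ) (hp : p.Prime) (A : ℤ) (hA : Int.gcd A p = 1)
    (k : ℕ) (hk : 0 < k) (h3 : k % 3 = 1) :
    S A (p ^ k) = (p : ℂ) ^ ((2 * k - 2) / 3) * S A p := by
  obtain ⟨m, rfl⟩ : ∃ m, k = 3*m+1 := ⟨k/3, by omega⟩
  rw [show (2*(3*m+1)-2)/3 = 2*m by omega]
  exact main_aux p hp A hA m
end CubicAppendix
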